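/- arXiv:2312.04767 — 3 statements merged into one kernel-verified Lean document; each statement's English description precedes it below -/
import Mathlib

section
/- Let n, m ∈ ℕ, T > 0, U ⊆ ℝᵐ, f : ℝⁿ × ℝᵐ → ℝⁿ, L : ℝⁿ × ℝᵐ → ℝ, ψ : ℝⁿ → ℝ, and let W : ℝⁿ × ℝ → ℝ be continuously differentiable on ℝⁿ × [0, T]. Assume (i) for every x ∈ ℝⁿ, t ∈ [0, T] and u ∈ U: ∂W/∂t(x,t) + L(x,u) + ⟨∇ₓW(x,t), f(x,u)⟩ ≥ 0, and (ii) W(x,T) = ψ(x) for all x ∈ ℝⁿ. Then for every control u : [0,T] → U and every absolutely continuous trajectory x : [0,T] → ℝⁿ satisfying x'(t) = f(x(t), u(t)) for all t ∈ [0,T], with t ↦ L(x(t),u(t)) integrable, the total cost satisfies ∫₀ᵀ L(x(t),u(t)) dt + ψ(x(T)) ≥ W(x(0), 0). -/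
open MeasureTheory Set

/-- Verification (lower-bound) half of Theorem 2 of the paper: if
`W : ℝⁿ × ℝ → ℝ` is `C¹` on `ℝⁿ × [0,T]`, satisfies the HJB inequality
`∂W/∂t(x,t) + L(x,u) + ⟨∇ₓW(x,t), f(x,u)⟩ ≥ 0` for all `x`, `t ∈ [0,T]`,
`u ∈ U` (expressed via the derivative of `W` in the direction `(f x u, 1)`),
and the terminal condition `W(x,T) = ψ x`, then the cost of every admissible
trajectory of `ẋ = f(x,u)` is at least `W(x(0), 0)`. -/
theorem hjb_verification_lower_bound
    (n m : ℕ) (T : ℝ) (hT : 0 < T)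
    (U : Set (EuclideanSpace ℝ (Fin m)))
    (f : EuclideanSpace ℝ (Fin n) → EuclideanSpace ℝ (Fin m) → EuclideanSpace ℝ (Fin n))
    (L : EuclideanSpace ℝ (Fin n) → EuclideanSpace ℝ (Fin m) → ℝ)
    (ψ : EuclideanSpace ℝ (Fin n) → ℝ)
    (W : EuclideanSpace ℝ (Fin n) × ℝ → ℝ)
    (hW : ContDiffOn ℝ 1 W (Set.univ ×ˢ Set.Icc 0 T))
    (hHJB : ∀ x : EuclideanSpace ℝ (Fin n), ∀ t ∈ Set.Icc (0:ℝ) T, ∀ u ∈ U,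
      0 ≤ fderivWithin ℝ W (Set.univ ×ˢ Set.Icc 0 T) (x, t) (f x u, 1) + L x u)
    (hterm : ∀ x : EuclideanSpace ℝ (Fin n), W (x, T) = ψ x)
    (u : ℝ → EuclideanSpace ℝ (Fin m)) (hu : ∀ t ∈ Set.Icc (0:ℝ) T, u t ∈ U)
    (x : ℝ → EuclideanSpace ℝ (Fin n))
    (hx : ∀ t ∈ Set.Icc (0:ℝ) T, HasDerivAt x (f (x t) (u t)) t)
    (hint : IntervalIntegrable (fun t => L (x t) (u t)) volume 0 T) :
    W (x 0, 0) ≤ (∫ t in (0:ℝ)..T, L (x t) (u t)) + ψ (x T) := by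
  set S : Set (EuclideanSpace ℝ (Fin n) × ℝ) := Set.univ ×ˢ Set.Icc 0 T with hS
  set g : ℝ → ℝ := fun t => W (x t, t) with hg
  set d : ℝ → ℝ := fun t => fderivWithin ℝ W S (x t, t) (f (x t) (u t), 1) with hd
  have hmem : ∀ t ∈ Set.Icc (0:ℝ) T, (x t, t) ∈ S := by
    intro t ht; exact ⟨Set.mem_univ _, ht⟩
  -- g has derivative d within Icc 0 T
  have hgderiv : ∀ t ∈ Set.Icc (0:ℝ) T, HasDerivWithinAt g (d t) (Set.Icc 0 T) t := by
    intro t ht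
    have hWd : HasFDerivWithinAt W (fderivWithin ℝ W S (x t, t)) S (x t, t) :=
      ((hW.differentiableOn one_ne_zero) (x t, t) (hmem t ht)).hasFDerivWithinAt
    have hγ : HasDerivWithinAt (fun s => (x s, s)) (f (x t) (u t), (1:ℝ)) (Set.Icc 0 T) t :=
      ((hx t ht).prodMk (hasDerivAt_id t)).hasDerivWithinAt
    exact hWd.comp_hasDerivWithinAt_of_eq t hγ (fun s hs => hmem s hs) rfl
  have hgc : ContinuousOn g (Set.Icc 0 T) := by
    intro t ht; exact ((hgderiv t ht).continuousWithinAt)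
  have hderiv' : ∀ t ∈ Set.Ioo (0:ℝ) T, HasDerivWithinAt g (d t) (Set.Ioi t) t := by
    intro t ht
    refine (hgderiv t (Set.mem_Icc_of_Ioo ht)).mono_of_mem_nhdsWithin ?_
    have : Set.Ioc t T ∈ nhdsWithin t (Set.Ioi t) := by
      rw [← Set.Ioi_inter_Iic]
      exact inter_mem_nhdsWithin _ (Iic_mem_nhds ht.2)
    exact Filter.mem_of_superset this (fun s hs => ⟨le_of_lt (lt_of_lt_of_le ht.1 hs.1.le), hs.2⟩)
  have hφint : IntegrableOn (fun t => -L (x t) (u t)) (Set.Icc 0 T) volume := by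
    rw [integrableOn_Icc_iff_integrableOn_Ioc]
    exact (hint.neg.1)
  have key : (∫ t in (0:ℝ)..T, -L (x t) (u t)) ≤ g T - g 0 := by
    apply sub_nonneg.mp
    have := intervalIntegral.integral_le_sub_of_hasDeriv_right_of_le hT.le hgc hderiv' hφint
      (fun t ht => by
        have h := hHJB (x t) t (Set.mem_Icc_of_Ioo ht) (u t) (hu t (Set.mem_Icc_of_Ioo ht))
        simp only [hd]; linarith)
    linarith
  have hneg : (∫ t in (0:ℝ)..T, -L (x t) (u t)) = -∫ t in (0:ℝ)..T, L (x t) (u t) := by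
    simp [intervalIntegral.integral_neg]
  have hgT : g T = ψ (x T) := hterm (x T)
  have hg0 : g 0 = W (x 0, 0) := rfl
  rw [hneg] at key
  linarith
end

section
/- Let n, m ∈ ℕ, M, γ, ε ≥ 0, T > 0, and let f : ℝⁿ × ℝᵐ → ℝⁿ satisfy ‖f(x,u) − f(y,v)‖ ≤ M(‖x − y‖ + ‖u − v‖) for all x, y, u, v. Let u, û : [0,T] → ℝᵐ be measurable with ∫₀ᵀ ‖u(s) − û(s)‖ ds ≤ ε, and let x, x̂ : [0,T] → ℝⁿ be continuous solutions of x(t) = x(0) + ∫₀ᵗ f(x(s),u(s)) ds and x̂(t) = x̂(0) + ∫₀ᵗ f(x̂(s),û(s)) ds with x(0) = x̂(0). Let V, V̂ : ℝⁿ × [0,T] → ℝ satisfy (i) the uniform Lipschitz condition |V(y,t) − V(z,t)| ≤ γ ‖y − z‖ for all y, z ∈ ℝⁿ, t ∈ [0,T], and (ii) the uniform approximation bound |V(y,t) − V̂(y,t)| ≤ ε for all y ∈ ℝⁿ, t ∈ [0,T]. Then for every t ∈ [0,T], setting β = M e^{M t}, one has |V(x(t), t) − V̂(x̂(t), t)|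 ≤ (γβ + 1) ε. -/
open MeasureTheory Set

/-- Theorem 4 of the paper: let `V` be the true value function, globally
`γ`-Lipschitz in the state uniformly in `t ∈ [0,T]`, and `V̂` a function
approximator accurate to within `ε` uniformly; let `û` be an `ε`-accurate
(in `L¹`) approximant of the optimal control `u`, and let `x`, `x̂` be the
trajectories of `ẋ = f(x,u)` (with `f` jointly `M`-Lipschitz) generated by
`u` and `û` from the same initial state.  Then for every `t ∈ [0,T]`, with
`β = M e^{M t}`, one has `|V(x(t),t) − V̂(x̂(t),t)| ≤ (γβ + 1) ε`. -/
theorem value_function_approximation_error_bound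
    (n m : ℕ) (M γ ε T : ℝ) (hM : 0 ≤ M) (hγ : 0 ≤ γ) (hε : 0 ≤ ε) (hT : 0 < T)
    (f : EuclideanSpace ℝ (Fin n) → EuclideanSpace ℝ (Fin m) → EuclideanSpace ℝ (Fin n))
    (hf : ∀ (x y : EuclideanSpace ℝ (Fin n)) (u v : EuclideanSpace ℝ (Fin m)),
      ‖f x u - f y v‖ ≤ M * (‖x - y‖ + ‖u - v‖))
    (u uhat : ℝ → EuclideanSpace ℝ (Fin m))
    (hum : Measurable u) (huhatm : Measurable uhat)
    (hintu : IntervalIntegrable (fun s => ‖u s - uhat s‖) volume 0 T)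
    (huerr : (∫ s in (0:ℝ)..T, ‖u s - uhat s‖) ≤ ε)
    (x xhat : ℝ → EuclideanSpace ℝ (Fin n))
    (hxc : Continuous x) (hxhatc : Continuous xhat)
    (hintx : IntervalIntegrable (fun s => f (x s) (u s)) volume 0 T)
    (hintxhat : IntervalIntegrable (fun s => f (xhat s) (uhat s)) volume 0 T)
    (hx : ∀ t ∈ Set.Icc (0:ℝ) T, x t = x 0 + ∫ s in (0:ℝ)..t, f (x s) (u s))
    (hxhat : ∀ t ∈ Set.Icc (0:ℝ) T,
      xhat t = xhat 0 + ∫ s in (0:ℝ)..t, f (xhat s) (uhat s))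
    (hx0 : x 0 = xhat 0)
    (V Vhat : EuclideanSpace ℝ (Fin n) → ℝ → ℝ)
    (hVLip : ∀ (y z : EuclideanSpace ℝ (Fin n)), ∀ t ∈ Set.Icc (0:ℝ) T,
      |V y t - V z t| ≤ γ * ‖y - z‖)
    (hVapprox : ∀ (y : EuclideanSpace ℝ (Fin n)), ∀ t ∈ Set.Icc (0:ℝ) T,
      |V y t - Vhat y t| ≤ ε) :
    ∀ t ∈ Set.Icc (0:ℝ) T,
      |V (x t) t - Vhat (xhat t) t| ≤ (γ * (M * Real.exp (M * t)) + 1) * ε := by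
  intro t ht
  obtain ⟨ht0, htT⟩ := ht
  set g : ℝ → ℝ := fun s => ‖x s - xhat s‖ with hg
  have hgc : Continuous g := (hxc.sub hxhatc).norm
  have hgnn : ∀ s, 0 ≤ g s := fun s => norm_nonneg _
  set C : ℝ := ∫ s in (0:ℝ)..T, ‖u s - uhat s‖ with hC
  have hCnn : 0 ≤ C :=
    intervalIntegral.integral_nonneg hT.le (fun s _ => norm_nonneg _)
  set F : ℝ → ℝ := fun r => ∫ s in (0:ℝ)..r, g s with hF
  have hFderiv : ∀ r : ℝ, HasDerivAt F (g r) r := fun r =>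
    (hgc.integral_hasStrictDerivAt 0 r).hasDerivAt
  have hFnn : ∀ r ∈ Icc (0:ℝ) T, 0 ≤ F r := fun r hr =>
    intervalIntegral.integral_nonneg hr.1 (fun s _ => hgnn s)
  -- key integral inequality
  have hkey : ∀ r ∈ Icc (0:ℝ) T, g r ≤ M * F r + M * C := by
    intro r hr
    have hsub : Set.uIcc (0:ℝ) r ⊆ Set.uIcc (0:ℝ) T := by
      rw [Set.uIcc_of_le hr.1, Set.uIcc_of_le hT.le]
      exact Set.Icc_subset_Icc le_rfl hr.2
    have hix : IntervalIntegrable (fun s => f (x s) (u s)) volume 0 r :=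
      hintx.mono_set hsub
    have hixh : IntervalIntegrable (fun s => f (xhat s) (uhat s)) volume 0 r :=
      hintxhat.mono_set hsub
    have hiu : IntervalIntegrable (fun s => ‖u s - uhat s‖) volume 0 r :=
      hintu.mono_set hsub
    have heq : x r - xhat r = ∫ s in (0:ℝ)..r, (f (x s) (u s) - f (xhat s) (uhat s)) := by
      rw [hx r hr, hxhat r hr, hx0, intervalIntegral.integral_sub hix hixh]
      abel
    have h1 : g r ≤ ∫ s in (0:ℝ)..r, ‖f (x s) (u s) - f (xhat s) (uhat s)‖ := by
      rw [hg]
      simp only [heq]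
      exact intervalIntegral.norm_integral_le_abs_integral_norm.trans
        (le_of_eq (abs_of_nonneg (intervalIntegral.integral_nonneg hr.1
          (fun s _ => norm_nonneg _))))
    have h2 : (∫ s in (0:ℝ)..r, ‖f (x s) (u s) - f (xhat s) (uhat s)‖)
        ≤ ∫ s in (0:ℝ)..r, M * (g s + ‖u s - uhat s‖) := by
      apply intervalIntegral.integral_mono_on hr.1 ((hix.sub hixh).norm)
      · exact ((hgc.intervalIntegrable 0 r).add hiu).const_mul M
      · intro s _
        exact hf (x s) (xhat s) (u s) (uhat s)
    have h3 : (∫ s in (0:ℝ)..r, M * (g s + ‖u s - uhat s‖))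
        = M * F r + M * ∫ s in (0:ℝ)..r, ‖u s - uhat s‖ := by
      rw [intervalIntegral.integral_const_mul, intervalIntegral.integral_add
        (hgc.intervalIntegrable 0 r) hiu, mul_add]
    have h4 : (∫ s in (0:ℝ)..r, ‖u s - uhat s‖) ≤ C :=
      intervalIntegral.integral_mono_interval le_rfl hr.1 hr.2
        (Filter.Eventually.of_forall (fun s => norm_nonneg _)) hintu
    calc g r ≤ _ := h1
      _ ≤ _ := h2
      _ = _ := h3
      _ ≤ M * F r + M * C := by nlinarith
  -- Gronwall
  have hgron : ∀ r ∈ Icc (0:ℝ) T, F r ≤ gronwallBound 0 M (M * C) (r - 0) := by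
    have hFc : ContinuousOn F (Icc 0 T) :=
      fun r _ => (hFderiv r).continuousAt.continuousWithinAt
    refine le_gronwallBound_of_liminf_deriv_right_le (f' := g) hFc ?_ ?_ ?_
    · intro r hr rr hrr
      exact ((hFderiv r).hasDerivWithinAt (s := Ici r)).liminf_right_slope_le hrr
    · simp [hF]
    · intro r hr
      have := hkey r ⟨hr.1, hr.2.le⟩
      nlinarith [hFnn r ⟨hr.1, hr.2.le⟩]
  -- trajectory bound
  have htraj : g t ≤ M * ε * Real.exp (M * t) := by
    have hFt := hgron t ⟨ht0, htT⟩
    have hgt := hkey t ⟨ht0, htT⟩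
    rcases eq_or_lt_of_le hM with hM0 | hM0
    · have h0 : g t ≤ 0 := by
        rw [← hM0] at hgt; simpa using hgt
      have : (0:ℝ) ≤ M * ε * Real.exp (M * t) := by positivity
      linarith
    · rw [gronwallBound_of_K_ne_0 hM0.ne'] at hFt
      simp only [sub_zero, zero_mul, zero_add] at hFt
      have hexp : (1:ℝ) ≤ Real.exp (M * t) :=
        Real.one_le_exp (by positivity)
      have hCε : C ≤ ε := huerr
      have hd : M * C / M = C := by field_simp
      rw [hd] at hFt
      have h5 : M * F t ≤ M * (C * (Real.exp (M * t) - 1)) :=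
        mul_le_mul_of_nonneg_left hFt hM0.le
      have h6 : M * C * Real.exp (M * t) ≤ M * ε * Real.exp (M * t) :=
        mul_le_mul_of_nonneg_right (mul_le_mul_of_nonneg_left hCε hM) (Real.exp_pos _).le
      nlinarith
  -- conclude
  have hVx : |V (x t) t - V (xhat t) t| ≤ γ * g t := hVLip (x t) (xhat t) t ⟨ht0, htT⟩
  have hVa : |V (xhat t) t - Vhat (xhat t) t| ≤ ε := hVapprox (xhat t) t ⟨ht0, htT⟩
  have htri : |V (x t) t - Vhat (xhat t) t|
      ≤ |V (x t) t - V (xhat t) t| + |V (xhat t) t - Vhat (xhat t) t| := by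
    have := abs_sub_abs_le_abs_sub (V (x t) t) (Vhat (xhat t) t)
    exact (abs_sub_le _ _ _)
  have hγg : γ * g t ≤ γ * (M * ε * Real.exp (M * t)) :=
    mul_le_mul_of_nonneg_left htraj hγ
  calc |V (x t) t - Vhat (xhat t) t| ≤ _ := htri
    _ ≤ γ * g t + ε := by linarith
    _ ≤ (γ * (M * Real.exp (M * t)) + 1) * ε := by nlinarith
end

section
/- Let n, m ∈ ℕ and p ∈ [1, ∞). For every function f* ∈ L^p(ℝⁿ; ℝᵐ) and every ε > 0, there exists a feedforward ReLU neural network g : ℝⁿ → ℝᵐ with input dimension n, output dimension m, an arbitrary (finite) number of hidden layers each of width exactly n + m + 1, ReLU activation ρ(x) = max(x, 0) applied componentwise in the hidden layers, and identity activation in the output layer — i.e., g = A_{k+1} ∘ σ ∘ A_k ∘ σ ∘ ⋯ ∘ σ ∘ A_1 for some k ≥ 1, where A_1 : ℝⁿ → ℝ^{n+m+1}, A_2, …, A_k : ℝ^{n+m+1} → ℝ^{n+m+1}, A_{k+1} : ℝ^{n+m+1} → ℝᵐ are affine maps and σ is the componentwise ReLU — such that ‖f* − g‖_{L^p} ≤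 ε. That is, the class of such ReLU networks of hidden width n + m + 1 is dense in L^p(ℝⁿ; ℝᵐ). -/
open MeasureTheory Filter Matrix
open scoped ENNReal NNReal

/-- An affine layer `v ↦ A v + b`. -/
noncomputable def affineLayer {p q : ℕ} (A : Matrix (Fin p) (Fin q) ℝ)
    (b : Fin p → ℝ) (v : Fin q → ℝ) : Fin p → ℝ :=
  A.mulVec v + b

/-- Componentwise ReLU activation `ρ(x) = max(x, 0)`. -/
def reluVec {p : ℕ} (v : Fin p → ℝ) : Fin p → ℝ :=
  fun i => max (v i) 0

/-- A feedforward ReLU network `A_{k+1} ∘ σ ∘ A_k ∘ σ ∘ ⋯ ∘ σ ∘ A₁` with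
input dimension `n`, output dimension `m`, `k = j + 1 ≥ 1` hidden layers each
of width `n + m + 1` (first affine map `A₁ : ℝⁿ → ℝ^{n+m+1}`, middle affine
maps `A₂, …, A_k` of width `n+m+1`, output affine map
`A_{k+1} : ℝ^{n+m+1} → ℝᵐ`), ReLU activation in the hidden layers and
identity activation in the output layer. -/
noncomputable def reluNetwork (n m j : ℕ)
    (A₁ : Matrix (Fin (n + m + 1)) (Fin n) ℝ) (b₁ : Fin (n + m + 1) → ℝ)
    (As : Fin j → Matrix (Fin (n + m + 1)) (Fin (n + m + 1)) ℝ)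
    (bs : Fin j → Fin (n + m + 1) → ℝ)
    (Aout : Matrix (Fin m) (Fin (n + m + 1)) ℝ) (bout : Fin m → ℝ)
    (x : EuclideanSpace ℝ (Fin n)) : EuclideanSpace ℝ (Fin m) :=
  WithLp.toLp 2 (affineLayer Aout bout
    ((List.finRange j).foldl (fun v i => reluVec (affineLayer (As i) (bs i) v))
      (reluVec (affineLayer A₁ b₁ x))))


namespace RNet

variable {n m : ℕ}

def idx (n m : ℕ) : (Fin n ⊕ (Fin m ⊕ Fin 1)) ≃ Fin (n + m + 1) :=
  (Equiv.sumCongr (Equiv.refl (Fin n)) finSumFinEquiv).trans finSumFinEquiv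

def mk (z : Fin n → ℝ) (a : Fin m → ℝ) (s : ℝ) : Fin (n + m + 1) → ℝ :=
  fun i => Sum.elim z (Sum.elim a fun _ => s) ((idx n m).symm i)

@[simp] lemma mk_inl (z : Fin n → ℝ) (a : Fin m → ℝ) (s : ℝ) (k : Fin n) :
    mk z a s (idx n m (.inl k)) = z k := by simp [mk]

@[simp] lemma mk_inrl (z : Fin n → ℝ) (a : Fin m → ℝ) (s : ℝ) (k : Fin m) :
    mk z a s (idx n m (.inr (.inl k))) = a k := by simp [mk]

@[simp] lemma mk_inrr (z : Fin n → ℝ) (a : Fin m → ℝ) (s : ℝ) (u : Fin 1) :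
    mk z a s (idx n m (.inr (.inr u))) = s := by simp [mk]

lemma sum_split (f : Fin (n + m + 1) → ℝ) :
    ∑ i, f i = (∑ k : Fin n, f (idx n m (.inl k)))
      + ((∑ k : Fin m, f (idx n m (.inr (.inl k)))) + f (idx n m (.inr (.inr 0)))) := by
  rw [← Equiv.sum_comp (idx n m) f, Fintype.sum_sum_type, Fintype.sum_sum_type]
  simp

lemma dot_mk (rz : Fin n → ℝ) (ra : Fin m → ℝ) (rs : ℝ) (z : Fin n → ℝ)
    (a : Fin m → ℝ) (s : ℝ) :
    mk rz ra rs ⬝ᵥ mk z a s = rz ⬝ᵥ z + ra ⬝ᵥ a + rs * s := by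
  unfold dotProduct
  rw [sum_split (fun i => mk rz ra rs i * mk z a s i)]
  simp; ring


lemma mk_congr {z1 z2 : Fin n → ℝ} {a1 a2 : Fin m → ℝ} {s1 s2 : ℝ}
    (hz : ∀ k, z1 k = z2 k) (ha : ∀ k, a1 k = a2 k) (hs : s1 = s2) :
    mk z1 a1 s1 = mk z2 a2 s2 := by
  rw [funext hz, funext ha, hs]

/-- matrix from row specs -/
def mkMat (fz : Fin n → Fin (n + m + 1) → ℝ) (fa : Fin m → Fin (n + m + 1) → ℝ)
    (fs : Fin (n + m + 1) → ℝ) : Matrix (Fin (n + m + 1)) (Fin (n + m + 1)) ℝ :=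
  fun j => Sum.elim fz (Sum.elim fa fun _ => fs) ((idx n m).symm j)

lemma layer_eval (fz : Fin n → Fin (n + m + 1) → ℝ) (fa : Fin m → Fin (n + m + 1) → ℝ)
    (fs : Fin (n + m + 1) → ℝ) (bz : Fin n → ℝ) (ba : Fin m → ℝ) (bs : ℝ)
    (v : Fin (n + m + 1) → ℝ) :
    reluVec (affineLayer (mkMat fz fa fs) (mk bz ba bs) v)
      = mk (fun k => max (fz k ⬝ᵥ v + bz k) 0)
           (fun k => max (fa k ⬝ᵥ v + ba k) 0)
           (max (fs ⬝ᵥ v + bs) 0) := by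
  funext j
  obtain ⟨e, rfl⟩ : ∃ e, j = idx n m e := ⟨(idx n m).symm j, ((idx n m).apply_symm_apply j).symm⟩
  cases e with
  | inl k => simp [reluVec, affineLayer, mkMat, Matrix.mulVec, mk]
  | inr e' =>
    cases e' with
    | inl k => simp [reluVec, affineLayer, mkMat, Matrix.mulVec, mk]
    | inr u => simp [reluVec, affineLayer, mkMat, Matrix.mulVec, mk]

abbrev Layer (n m : ℕ) := Matrix (Fin (n + m + 1)) (Fin (n + m + 1)) ℝ × (Fin (n + m + 1) → ℝ)

noncomputable def netStep (l : Layer n m) (v : Fin (n + m + 1) → ℝ) : Fin (n + m + 1) → ℝ :=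
  reluVec (affineLayer l.1 l.2 v)

noncomputable def netFold (L : List (Layer n m)) (v : Fin (n + m + 1) → ℝ) : Fin (n + m + 1) → ℝ :=
  L.foldl (fun v l => netStep l v) v

def zIdRows (n m : ℕ) : Fin n → Fin (n + m + 1) → ℝ := fun k => mk (Pi.single k 1) 0 0
def aIdRows (n m : ℕ) : Fin m → Fin (n + m + 1) → ℝ := fun k => mk 0 (Pi.single k 1) 0

def gLayer (w : Fin n → ℝ) (θ : ℝ) : Layer n m :=
  (mkMat (zIdRows n m) (aIdRows n m) (mk w 0 1), mk 0 0 θ)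

def capLayer (n m : ℕ) (η : ℝ) : Layer n m :=
  (mkMat (zIdRows n m) (aIdRows n m) (mk 0 0 (-1)), mk 0 0 η)

def accLayer (γ : Fin m → ℝ) : Layer n m :=
  (mkMat (zIdRows n m) (fun k => mk 0 (Pi.single k 1) (γ k)) (mk 0 0 0), mk 0 0 0)

lemma g_eval (w : Fin n → ℝ) (θ : ℝ) (z : Fin n → ℝ) (a : Fin m → ℝ) (s : ℝ)
    (hz : ∀ i, 0 ≤ z i) (ha : ∀ k, 0 ≤ a k) :
    netStep (gLayer w θ) (mk z a s) = mk z a (max (s + (w ⬝ᵥ z + θ)) 0) := by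
  unfold netStep gLayer
  rw [layer_eval]
  apply mk_congr
  · intro k
    simp [zIdRows, dot_mk, single_dotProduct, max_eq_left (hz k)]
  · intro k
    simp [aIdRows, dot_mk, single_dotProduct, max_eq_left (ha k)]
  · rw [dot_mk]
    simp; ring_nf

lemma cap_eval (η : ℝ) (z : Fin n → ℝ) (a : Fin m → ℝ) (s : ℝ)
    (hz : ∀ i, 0 ≤ z i) (ha : ∀ k, 0 ≤ a k) :
    netStep (capLayer n m η) (mk z a s) = mk z a (max (η - s) 0) := by
  unfold netStep capLayer
  rw [layer_eval]
  apply mk_congr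
  · intro k
    simp [zIdRows, dot_mk, single_dotProduct, max_eq_left (hz k)]
  · intro k
    simp [aIdRows, dot_mk, single_dotProduct, max_eq_left (ha k)]
  · rw [dot_mk]
    simp; ring_nf

lemma acc_eval (γ : Fin m → ℝ) (z : Fin n → ℝ) (a : Fin m → ℝ) (s : ℝ)
    (hz : ∀ i, 0 ≤ z i) (ha : ∀ k, 0 ≤ a k + γ k * s) :
    netStep (accLayer γ) (mk z a s) = mk z (fun k => a k + γ k * s) 0 := by
  unfold netStep accLayer
  rw [layer_eval]
  apply mk_congr
  · intro k
    simp [zIdRows, dot_mk, single_dotProduct, max_eq_left (hz k)]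
  · intro k
    rw [dot_mk]
    simp only [zero_dotProduct, single_dotProduct, one_mul, zero_add, Pi.zero_apply, add_zero]
    rw [max_eq_left (ha k)]
  · rw [dot_mk]; simp


section Analysis
variable {n : ℕ}

def diffs {α : Type*} [Sub α] : List α → List α
  | [] => []
  | [h] => [h]
  | h1 :: h2 :: t => (h1 - h2) :: diffs (h2 :: t)

lemma diffs_map {α β : Type*} [Sub α] [Sub β] (f : α → β)
    (hf : ∀ x y, f (x - y) = f x - f y) :
    ∀ L : List α, (diffs L).map f = diffs (L.map f)
  | [] => by simp [diffs]
  | [h] => by simp [diffs]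
  | h1 :: h2 :: t => by
    have ih := diffs_map f hf (h2 :: t)
    simp only [List.map_cons] at ih ⊢
    simp only [diffs, List.map_cons, hf]
    rw [ih]

lemma foldl_diffs : ∀ (h : ℝ) (t : List ℝ) (s : ℝ), 0 ≤ s →
    (diffs (h :: t)).foldl (fun s g => max (s + g) 0) s
      = max (s + h) ((h :: t).foldr max 0)
  | h, [], s, hs => by
    simp only [diffs, List.foldl_cons, List.foldl_nil, List.foldr_cons, List.foldr_nil]
    rw [← max_assoc, max_eq_left (by linarith : h ≤ s + h)]
  | h, h2 :: t, s, hs => by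
    have ih := foldl_diffs h2 t (max (s + (h - h2)) 0) (le_max_right _ _)
    simp only [diffs, List.foldl_cons] at ih ⊢
    rw [ih]
    have hF : h2 ≤ (h2 :: t).foldr max 0 := by
      simp only [List.foldr_cons]; exact le_max_left _ _
    have e1 : max (s + (h - h2)) 0 + h2 = max (s + h) h2 := by
      rw [← max_add_add_right]; ring_nf
    rw [e1, max_assoc, max_eq_right hF]
    rw [show List.foldr max 0 (h :: h2 :: t) = max h ((h2 :: t).foldr max 0) from rfl]
    rw [← max_assoc, max_eq_left (by linarith : h ≤ s + h)]


lemma foldr_max_nonneg (L : List ℝ) : 0 ≤ L.foldr max 0 := by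
  induction L with
  | nil => simp
  | cons h t ih => simp only [List.foldr_cons]; exact le_max_of_le_right ih

lemma le_foldr_max (L : List ℝ) (v : ℝ) (hv : v ∈ L) : v ≤ L.foldr max 0 := by
  induction L with
  | nil => simp at hv
  | cons h t ih =>
    simp only [List.foldr_cons]
    rcases List.mem_cons.1 hv with h1 | h2
    · exact h1 ▸ le_max_left _ _
    · exact le_max_of_le_right (ih h2)

lemma foldr_max_nonpos (L : List ℝ) (h : ∀ v ∈ L, v ≤ 0) : L.foldr max 0 = 0 := by
  induction L with
  | nil => simp
  | cons a t ih =>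
    simp only [List.foldr_cons]
    rw [ih fun v hv => h v (List.mem_cons_of_mem a hv)]
    exact max_eq_right (h a (List.mem_cons_self))

def funList (lo hi : Fin n → ℝ) (η : ℝ) : List ((Fin n → ℝ) → ℝ) :=
  (List.finRange n).flatMap fun i => [fun y => lo i - y i, fun y => y i - hi i + η]

def Dval (lo hi : Fin n → ℝ) (η : ℝ) (y : Fin n → ℝ) : ℝ :=
  ((funList lo hi η).map fun f => f y).foldr max 0

noncomputable def bumpVal (lo hi : Fin n → ℝ) (η : ℝ) (y : Fin n → ℝ) : ℝ :=
  max (η - Dval lo hi η y) 0 / η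

lemma Dval_nonneg (lo hi : Fin n → ℝ) (η : ℝ) (y : Fin n → ℝ) : 0 ≤ Dval lo hi η y :=
  foldr_max_nonneg _

lemma lo_sub_le_Dval (lo hi : Fin n → ℝ) (η : ℝ) (y : Fin n → ℝ) (i : Fin n) :
    lo i - y i ≤ Dval lo hi η y := by
  apply le_foldr_max
  exact List.mem_map.2 ⟨fun y => lo i - y i,
    List.mem_flatMap.2 ⟨i, List.mem_finRange i, by simp⟩, rfl⟩

lemma sub_hi_le_Dval (lo hi : Fin n → ℝ) (η : ℝ) (y : Fin n → ℝ) (i : Fin n) :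
    y i - hi i + η ≤ Dval lo hi η y := by
  apply le_foldr_max
  exact List.mem_map.2 ⟨fun y => y i - hi i + η,
    List.mem_flatMap.2 ⟨i, List.mem_finRange i, by simp⟩, rfl⟩

lemma Dval_eq_zero (lo hi : Fin n → ℝ) (η : ℝ) (y : Fin n → ℝ)
    (h : ∀ i, lo i ≤ y i ∧ y i ≤ hi i - η) : Dval lo hi η y = 0 := by
  apply foldr_max_nonpos
  intro v hv
  obtain ⟨f, hf, rfl⟩ := List.mem_map.1 hv
  obtain ⟨i, -, hfi⟩ := List.mem_flatMap.1 hf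
  rcases List.mem_cons.1 hfi with rfl | hfi'
  · show lo i - y i ≤ 0
    linarith [(h i).1]
  · rcases List.mem_cons.1 hfi' with rfl | hh
    · show y i - hi i + η ≤ 0
      linarith [(h i).2]
    · simp at hh

lemma bumpVal_nonneg (lo hi : Fin n → ℝ) {η : ℝ} (hη : 0 < η) (y : Fin n → ℝ) :
    0 ≤ bumpVal lo hi η y :=
  div_nonneg (le_max_right _ _) hη.le

lemma bumpVal_le_one (lo hi : Fin n → ℝ) {η : ℝ} (hη : 0 < η) (y : Fin n → ℝ) :
    bumpVal lo hi η y ≤ 1 := by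
  rw [bumpVal, div_le_one hη]
  have := Dval_nonneg lo hi η y
  apply max_le <;> linarith

lemma abs_bumpVal_le_one (lo hi : Fin n → ℝ) {η : ℝ} (hη : 0 < η) (y : Fin n → ℝ) :
    |bumpVal lo hi η y| ≤ 1 := by
  rw [abs_of_nonneg (bumpVal_nonneg lo hi hη y)]; exact bumpVal_le_one lo hi hη y

lemma bumpVal_eq_one (lo hi : Fin n → ℝ) {η : ℝ} (hη : 0 < η) (y : Fin n → ℝ)
    (h : ∀ i, lo i ≤ y i ∧ y i ≤ hi i - η) : bumpVal lo hi η y = 1 := by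
  rw [bumpVal, Dval_eq_zero lo hi η y h, sub_zero, max_eq_left hη.le, div_self hη.ne']

lemma bumpVal_eq_zero (lo hi : Fin n → ℝ) {η : ℝ} (y : Fin n → ℝ)
    (h : η ≤ Dval lo hi η y) : bumpVal lo hi η y = 0 := by
  rw [bumpVal, max_eq_right (by linarith), zero_div]


end Analysis

section Machine
variable {n m : ℕ}

def evalPair (p : (Fin n → ℝ) × ℝ) (z : Fin n → ℝ) : ℝ := p.1 ⬝ᵥ z + p.2

def pairList (lo hi : Fin n → ℝ) (η C : ℝ) : List ((Fin n → ℝ) × ℝ) :=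
  (List.finRange n).flatMap fun i =>
    [(Pi.single i (-1), lo i + C), (Pi.single i 1, η - hi i - C)]

lemma evalPair_sub (z : Fin n → ℝ) (p q : (Fin n → ℝ) × ℝ) :
    evalPair (p - q) z = evalPair p z - evalPair q z := by
  simp only [evalPair, Prod.fst_sub, Prod.snd_sub, sub_dotProduct]
  ring

lemma map_evalPair_pairList (lo hi : Fin n → ℝ) (η C : ℝ) (z : Fin n → ℝ) :
    (pairList lo hi η C).map (fun p => evalPair p z)
      = (funList lo hi η).map fun f => f (fun i => z i - C) := by
  unfold pairList funList
  rw [List.map_flatMap, List.map_flatMap]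
  congr 1
  funext i
  simp only [List.map_cons, List.map_nil, evalPair, single_dotProduct, List.cons.injEq, and_true]
  constructor <;> ring

def gBlock (ps : List ((Fin n → ℝ) × ℝ)) : List (Layer n m) :=
  ps.map fun p => gLayer p.1 p.2

lemma gBlock_eval (ps : List ((Fin n → ℝ) × ℝ)) (z : Fin n → ℝ) (a : Fin m → ℝ) (s : ℝ)
    (hz : ∀ i, 0 ≤ z i) (ha : ∀ k, 0 ≤ a k) :
    netFold (gBlock ps) (mk z a s)
      = mk z a (ps.foldl (fun s p => max (s + evalPair p z) 0) s) := by
  induction ps generalizing s with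
  | nil => simp [gBlock, netFold]
  | cons p t ih =>
    simp only [gBlock, List.map_cons, netFold, List.foldl_cons]
    rw [g_eval _ _ _ _ _ hz ha]
    exact ih (max (s + (p.1 ⬝ᵥ z + p.2)) 0)

lemma gBlock_scratch (lo hi : Fin n → ℝ) (η C : ℝ) (z : Fin n → ℝ) :
    (diffs (pairList lo hi η C)).foldl (fun s p => max (s + evalPair p z) 0) (0:ℝ)
      = Dval lo hi η (fun i => z i - C) := by
  have h1 : (diffs (pairList lo hi η C)).foldl (fun s p => max (s + evalPair p z) 0) (0:ℝ)
      = ((diffs (pairList lo hi η C)).map (fun p => evalPair p z)).foldl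
          (fun s g => max (s + g) 0) (0:ℝ) := by
    rw [List.foldl_map]
  rw [h1, diffs_map _ (evalPair_sub z), map_evalPair_pairList]
  cases hE : (funList lo hi η).map (fun f => f fun i => z i - C) with
  | nil => simp [Dval, hE, diffs]
  | cons h t =>
    rw [foldl_diffs h t 0 le_rfl, Dval, hE]
    simp only [List.foldr_cons, zero_add]
    rw [← max_assoc, max_self]

noncomputable def bumpBlock (lo hi : Fin n → ℝ) (η C : ℝ) (c : Fin m → ℝ) : List (Layer n m) :=
  gBlock (diffs (pairList lo hi η C)) ++ [capLayer n m η, accLayer (fun k => c k / η)]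

lemma netFold_append (L1 L2 : List (Layer n m)) (v : Fin (n + m + 1) → ℝ) :
    netFold (L1 ++ L2) v = netFold L2 (netFold L1 v) := by
  simp [netFold, List.foldl_append]

lemma bumpBlock_eval (lo hi : Fin n → ℝ) (η C : ℝ) (c : Fin m → ℝ) (z : Fin n → ℝ)
    (a : Fin m → ℝ) (hη : 0 < η) (hz : ∀ i, 0 ≤ z i) (ha : ∀ k, |c k| ≤ a k) :
    netFold (bumpBlock lo hi η C c) (mk z a 0)
      = mk z (fun k => a k + c k * bumpVal lo hi η (fun i => z i - C)) 0 := by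
  have ha0 : ∀ k, 0 ≤ a k := fun k => (abs_nonneg _).trans (ha k)
  rw [bumpBlock, netFold_append, gBlock_eval _ _ _ _ hz ha0, gBlock_scratch]
  set D := Dval lo hi η (fun i => z i - C) with hD
  have heq : ∀ k, (c k / η) * max (η - D) 0 = c k * bumpVal lo hi η (fun i => z i - C) := by
    intro k
    rw [bumpVal, ← hD]
    ring
  have hbnd : ∀ k, 0 ≤ a k + (c k / η) * max (η - D) 0 := by
    intro k
    rw [heq k]
    have h1 := abs_bumpVal_le_one lo hi hη (fun i => z i - C)
    have h2 : |c k * bumpVal lo hi η (fun i => z i - C)| ≤ |c k| := by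
      rw [abs_mul]
      calc |c k| * |bumpVal lo hi η (fun i => z i - C)| ≤ |c k| * 1 :=
        mul_le_mul_of_nonneg_left h1 (abs_nonneg _)
      _ = |c k| := mul_one _
    have := ha k
    have := abs_le.1 h2
    linarith [this.1]
  simp only [netFold, List.foldl_cons, List.foldl_nil]
  have hcap : netStep (capLayer n m η) (mk z a D) = mk z a (max (η - D) 0) :=
    cap_eval η z a D hz ha0
  rw [hcap, acc_eval _ _ _ _ hz hbnd]
  exact mk_congr (fun _ => rfl) (fun k => by rw [heq k]) rfl

noncomputable def allBlocks (L : List ((Fin n → ℝ) × (Fin n → ℝ) × (Fin m → ℝ))) (η C : ℝ) :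
    List (Layer n m) :=
  L.flatMap fun B => bumpBlock B.1 B.2.1 η C B.2.2

lemma allBlocks_eval (L : List ((Fin n → ℝ) × (Fin n → ℝ) × (Fin m → ℝ))) (η C : ℝ)
    (hη : 0 < η) (z : Fin n → ℝ) (hz : ∀ i, 0 ≤ z i) (a : Fin m → ℝ)
    (ha : ∀ k, (L.map fun B => |B.2.2 k|).sum ≤ a k) :
    netFold (allBlocks L η C) (mk z a 0)
      = mk z (fun k => a k
          + (L.map fun B => B.2.2 k * bumpVal B.1 B.2.1 η (fun i => z i - C)).sum) 0 := by
  induction L generalizing a with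
  | nil =>
    simp only [allBlocks, List.flatMap_nil, netFold, List.foldl_nil, List.map_nil, List.sum_nil]
    exact (mk_congr (fun _ => rfl) (fun k => by ring) rfl).symm
  | cons B T ih =>
    have hTnn : ∀ k, 0 ≤ (T.map fun B => |B.2.2 k|).sum := by
      intro k
      apply List.sum_nonneg
      intro x hx
      obtain ⟨B', -, rfl⟩ := List.mem_map.1 hx
      exact abs_nonneg _
    have haB : ∀ k, |B.2.2 k| ≤ a k := by
      intro k
      have := ha k
      simp only [List.map_cons, List.sum_cons] at this
      linarith [hTnn k]
    rw [allBlocks, List.flatMap_cons, netFold_append,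
      show (T.flatMap fun B => bumpBlock B.1 B.2.1 η C B.2.2) = allBlocks T η C from rfl,
      bumpBlock_eval _ _ _ _ _ _ _ hη hz haB]
    have hbv : ∀ k, |B.2.2 k * bumpVal B.1 B.2.1 η (fun i => z i - C)| ≤ |B.2.2 k| := by
      intro k
      rw [abs_mul]
      calc |B.2.2 k| * |bumpVal B.1 B.2.1 η (fun i => z i - C)| ≤ |B.2.2 k| * 1 :=
        mul_le_mul_of_nonneg_left (abs_bumpVal_le_one _ _ hη _) (abs_nonneg _)
      _ = |B.2.2 k| := mul_one _
    rw [ih (fun k => a k + B.2.2 k * bumpVal B.1 B.2.1 η fun i => z i - C) ?hle]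
    case hle =>
      intro k
      beta_reduce
      have h1 := ha k
      simp only [List.map_cons, List.sum_cons] at h1
      have := abs_le.1 (hbv k)
      linarith [this.1]
    apply mk_congr (fun _ => rfl) _ rfl
    intro k
    simp only [List.map_cons, List.sum_cons]
    ring

end Machine

section InOut
variable {n m : ℕ}

def inMat (n m : ℕ) : Matrix (Fin (n + m + 1)) (Fin n) ℝ :=
  fun j => Sum.elim (fun k => Pi.single k 1) (Sum.elim (fun _ => 0) fun _ => 0) ((idx n m).symm j)

lemma in_eval (x : Fin n → ℝ) (C : ℝ) (Bv : Fin m → ℝ) (hB : ∀ k, 0 ≤ Bv k) :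
    reluVec (affineLayer (inMat n m) (mk (fun _ => C) Bv 0) x)
      = mk (fun i => max (x i + C) 0) Bv 0 := by
  funext j
  obtain ⟨e, rfl⟩ : ∃ e, j = idx n m e := ⟨(idx n m).symm j, ((idx n m).apply_symm_apply j).symm⟩
  cases e with
  | inl k =>
    simp [reluVec, affineLayer, inMat, Matrix.mulVec, mk, single_dotProduct]
  | inr e' =>
    cases e' with
    | inl k =>
      simp [reluVec, affineLayer, inMat, Matrix.mulVec, mk, zero_dotProduct,
        max_eq_left (hB k)]
    | inr u =>
      simp [reluVec, affineLayer, inMat, Matrix.mulVec, mk, zero_dotProduct]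

def outMat (n m : ℕ) : Matrix (Fin m) (Fin (n + m + 1)) ℝ := fun k => mk 0 (Pi.single k 1) 0

lemma out_eval (Bv : Fin m → ℝ) (z : Fin n → ℝ) (a : Fin m → ℝ) (s : ℝ) :
    affineLayer (outMat n m) (fun k => -Bv k) (mk z a s) = fun k => a k - Bv k := by
  funext k
  show mk (0 : Fin n → ℝ) (Pi.single k 1) 0 ⬝ᵥ mk z a s + (-Bv k) = a k - Bv k
  rw [dot_mk]
  simp [zero_dotProduct, single_dotProduct]
  ring

lemma foldl_finRange_get {α β : Type*} (L : List α) (f : β → α → β) (b : β) :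
    (List.finRange L.length).foldl (fun v i => f v (L.get i)) b = L.foldl f b := by
  induction L generalizing b with
  | nil => simp
  | cons a t ih =>
    show (List.finRange (t.length + 1)).foldl (fun v i => f v ((a :: t).get i)) b
        = List.foldl f b (a :: t)
    rw [List.finRange_succ]
    simp only [List.foldl_cons, List.foldl_map, List.get_cons_succ, List.get_cons_zero]
    exact ih (f b a)

lemma network_exists (L : List ((Fin n → ℝ) × (Fin n → ℝ) × (Fin m → ℝ))) (η C : ℝ)
    (hη : 0 < η) :
    ∃ (j : ℕ) (A₁ : Matrix (Fin (n + m + 1)) (Fin n) ℝ) (b₁ : Fin (n + m + 1) → ℝ)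
      (As : Fin j → Matrix (Fin (n + m + 1)) (Fin (n + m + 1)) ℝ)
      (bs : Fin j → Fin (n + m + 1) → ℝ)
      (Aout : Matrix (Fin m) (Fin (n + m + 1)) ℝ) (bout : Fin m → ℝ),
      ∀ x : EuclideanSpace ℝ (Fin n),
        reluNetwork n m j A₁ b₁ As bs Aout bout x
          = WithLp.toLp 2 (fun k => (L.map fun B =>
              B.2.2 k * bumpVal B.1 B.2.1 η (fun i => max (x i) (-C))).sum) := by
  classical
  set Bv : Fin m → ℝ := fun k => (L.map fun B => |B.2.2 k|).sum with hBv
  set HL : List (Layer n m) := allBlocks L η C with hHL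
  refine ⟨HL.length, inMat n m, mk (fun _ => C) Bv 0,
    fun i => (HL.get i).1, fun i => (HL.get i).2, outMat n m, fun k => -Bv k, ?_⟩
  intro x
  have hBnn : ∀ k, 0 ≤ Bv k := by
    intro k
    apply List.sum_nonneg
    intro v hv
    obtain ⟨B', -, rfl⟩ := List.mem_map.1 hv
    exact abs_nonneg _
  unfold reluNetwork
  show WithLp.toLp 2 (affineLayer (outMat n m) (fun k => -Bv k)
      ((List.finRange HL.length).foldl (fun v i => netStep (HL.get i) v)
        (reluVec (affineLayer (inMat n m) (mk (fun _ => C) Bv 0) x)))) = _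
  rw [foldl_finRange_get HL (fun v l => netStep l v)]
  rw [show (reluVec (affineLayer (inMat n m) (mk (fun _ => C) Bv 0) x))
      = mk (fun i => max (x i + C) 0) Bv 0 from in_eval x C Bv hBnn]
  rw [show (HL.foldl (fun v l => netStep l v) (mk (fun i => max (x i + C) 0) Bv 0))
      = netFold HL (mk (fun i => max (x i + C) 0) Bv 0) from rfl]
  rw [hHL, allBlocks_eval L η C hη _ (fun i => le_max_right _ _) Bv (fun k => le_of_eq rfl)]
  rw [out_eval]
  congr 1
  funext k
  have hsh : (fun i => (fun i' => max (x i' + C) 0) i - C) = fun i => max (x i) (-C) := by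
    funext i
    show max (x i + C) 0 - C = _
    rw [← max_sub_sub_right]
    congr 1 <;> ring
  rw [hsh]
  ring

end InOut

section Helpers
variable {n m : ℕ}

lemma euclid_norm_le_sum (v : EuclideanSpace ℝ (Fin m)) : ‖v‖ ≤ ∑ k, |v k| := by
  rw [EuclideanSpace.norm_eq]
  have h1 : ∑ i, ‖v i‖ ^ 2 ≤ (∑ i, |v i|) ^ 2 := by
    simpa [Real.norm_eq_abs] using
      Finset.sum_sq_le_sq_sum_of_nonneg (s := Finset.univ) (f := fun i => |v i|)
        (fun i _ => abs_nonneg (v i))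
  calc Real.sqrt (∑ i, ‖v i‖ ^ 2) ≤ Real.sqrt ((∑ i, |v i|) ^ 2) := Real.sqrt_le_sqrt h1
    _ = ∑ i, |v i| := Real.sqrt_sq (Finset.sum_nonneg fun i _ => abs_nonneg _)

lemma abs_coord_le_norm (v : EuclideanSpace ℝ (Fin n)) (i : Fin n) : |v i| ≤ ‖v‖ := by
  rw [EuclideanSpace.norm_eq]
  calc |v i| = Real.sqrt (‖v i‖ ^ 2) := by
        rw [Real.sqrt_sq_eq_abs]; simp [Real.norm_eq_abs]
    _ ≤ _ := Real.sqrt_le_sqrt (Finset.single_le_sum (f := fun i => ‖v i‖ ^ 2)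
        (fun i _ => sq_nonneg _) (Finset.mem_univ i))

lemma continuous_coord (i : Fin n) : Continuous fun x : EuclideanSpace ℝ (Fin n) => x i :=
  (continuous_apply i).comp (EuclideanSpace.equiv (Fin n) ℝ).continuous

lemma continuous_into_euclid (F : EuclideanSpace ℝ (Fin n) → Fin m → ℝ)
    (hF : ∀ k, Continuous fun x => F x k) :
    Continuous fun x => WithLp.toLp 2 (F x) :=
  (PiLp.continuous_toLp 2 _).comp (continuous_pi hF)

lemma measurable_into_euclid (F : EuclideanSpace ℝ (Fin n) → Fin m → ℝ)
    (hF : ∀ k, Measurable fun x => F x k) :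
    Measurable fun x => WithLp.toLp 2 (F x) :=
  ((PiLp.continuous_toLp 2 _).measurable).comp
    (measurable_pi_lambda F hF)

/-- dominated convergence for eLpNorm -/
lemma tendsto_eLpNorm_of_dominated {E : Type*} [NormedAddCommGroup E]
    {p : ℝ} (hp : 1 ≤ p)
    (G : ℕ → EuclideanSpace ℝ (Fin n) → E)
    (hG : ∀ l, AEStronglyMeasurable (G l) (volume : Measure (EuclideanSpace ℝ (Fin n))))
    (bound : EuclideanSpace ℝ (Fin n) → ℝ)
    (hb : ∀ l x, ‖G l x‖ ≤ bound x)
    (hbound : MemLp bound (ENNReal.ofReal p) volume)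
    (hlim : ∀ x, Tendsto (fun l => G l x) atTop (nhds 0)) :
    Tendsto (fun l => eLpNorm (G l) (ENNReal.ofReal p) volume) atTop (nhds 0) := by
  have hp0 : 0 < p := lt_of_lt_of_le one_pos hp
  have hq0 : ENNReal.ofReal p ≠ 0 := by
    simp only [ne_eq, ENNReal.ofReal_eq_zero, not_le]; linarith
  have hqt : ENNReal.ofReal p ≠ ⊤ := ENNReal.ofReal_ne_top
  have htr : (ENNReal.ofReal p).toReal = p := ENNReal.toReal_ofReal hp0.le
  have key : Tendsto (fun l => ∫⁻ x, (‖G l x‖₊ : ℝ≥0∞) ^ p ∂volume) atTop (nhds 0) := by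
    have h0 : (0 : ℝ≥0∞) = ∫⁻ _x : EuclideanSpace ℝ (Fin n), (0:ℝ≥0∞) ∂volume := by simp
    rw [h0]
    apply tendsto_lintegral_of_dominated_convergence' (fun x => (‖bound x‖₊ : ℝ≥0∞) ^ p)
    · intro l
      exact (ENNReal.continuous_rpow_const.measurable).comp_aemeasurable (hG l).enorm
    · intro l
      filter_upwards with x
      apply ENNReal.rpow_le_rpow _ hp0.le
      have h1 : ‖G l x‖ ≤ ‖bound x‖ := (hb l x).trans (le_abs_self _)
      exact_mod_cast ENNReal.coe_le_coe.2 (by exact_mod_cast h1)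
    · have hfin := hbound.2
      rw [eLpNorm_eq_lintegral_rpow_enorm_toReal hq0 hqt, htr] at hfin
      have := (ENNReal.rpow_lt_top_iff_of_pos (by positivity : (0:ℝ) < 1/p)).1 hfin
      exact this.ne
    · filter_upwards with x
      have h1 : Tendsto (fun l => ‖G l x‖) atTop (nhds 0) :=
        tendsto_zero_iff_norm_tendsto_zero.1 (hlim x)
      have h2 : Tendsto (fun l => (‖G l x‖₊ : ℝ≥0∞)) atTop (nhds 0) := by
        have := (ENNReal.continuous_ofReal.tendsto 0).comp h1
        simp only [Function.comp_def, ofReal_norm, ENNReal.ofReal_zero] at this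
        exact this
      have h3 := ((ENNReal.continuous_rpow_const (y := p)).tendsto (0 : ℝ≥0∞)).comp h2
      rw [ENNReal.zero_rpow_of_pos hp0] at h3
      exact h3
  have final := ((ENNReal.continuous_rpow_const (y := 1/p)).tendsto (0 : ℝ≥0∞)).comp key
  rw [ENNReal.zero_rpow_of_pos (by positivity : (0:ℝ) < 1/p)] at final
  apply final.congr
  intro l
  rw [eLpNorm_eq_lintegral_rpow_enorm_toReal hq0 hqt, htr]
  rfl

lemma exists_eLpNorm_le {F : ℕ → ℝ≥0∞}
    (h : Tendsto F atTop (nhds 0)) {ε : ℝ} (hε : 0 < ε) :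
    ∃ l, F l ≤ ENNReal.ofReal ε := by
  have : ∀ᶠ l in atTop, F l < ENNReal.ofReal ε :=
    h.eventually_lt_const (by simpa using (ENNReal.ofReal_pos.2 hε))
  obtain ⟨l, hl⟩ := this.exists
  exact ⟨l, hl.le⟩


end Helpers

section Bumps
variable {n m : ℕ}

def boxSet (lo hi : Fin n → ℝ) : Set (EuclideanSpace ℝ (Fin n)) :=
  {y | ∀ i, lo i ≤ y i ∧ y i < hi i}

noncomputable def boxInd (lo hi : Fin n → ℝ) (x : EuclideanSpace ℝ (Fin n)) : ℝ :=
  (boxSet lo hi).indicator (fun _ => 1) x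

lemma boxInd_of_mem {lo hi : Fin n → ℝ} {x : EuclideanSpace ℝ (Fin n)}
    (h : x ∈ boxSet lo hi) : boxInd lo hi x = 1 := Set.indicator_of_mem h _

lemma boxInd_of_not_mem {lo hi : Fin n → ℝ} {x : EuclideanSpace ℝ (Fin n)}
    (h : x ∉ boxSet lo hi) : boxInd lo hi x = 0 := Set.indicator_of_notMem h _

lemma boxInd_nonneg (lo hi : Fin n → ℝ) (x : EuclideanSpace ℝ (Fin n)) :
    0 ≤ boxInd lo hi x := by
  by_cases h : x ∈ boxSet lo hi
  · rw [boxInd_of_mem h]; norm_num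
  · rw [boxInd_of_not_mem h]

lemma boxInd_le_one (lo hi : Fin n → ℝ) (x : EuclideanSpace ℝ (Fin n)) :
    boxInd lo hi x ≤ 1 := by
  by_cases h : x ∈ boxSet lo hi
  · rw [boxInd_of_mem h]
  · rw [boxInd_of_not_mem h]; norm_num

lemma measurableSet_boxSet (lo hi : Fin n → ℝ) : MeasurableSet (boxSet lo hi) := by
  have h : boxSet lo hi
      = ⋂ i, (fun x : EuclideanSpace ℝ (Fin n) => x i) ⁻¹' Set.Ico (lo i) (hi i) := by
    ext y
    simp [boxSet, Set.mem_iInter, Set.mem_Ico]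
  rw [h]
  exact MeasurableSet.iInter fun i => (continuous_coord i).measurable measurableSet_Ico

lemma measurable_boxInd (lo hi : Fin n → ℝ) : Measurable (boxInd lo hi) :=
  measurable_const.indicator (measurableSet_boxSet lo hi)

lemma continuous_val_list (L : List ((Fin n → ℝ) → ℝ))
    (hL : ∀ f ∈ L, Continuous fun x : EuclideanSpace ℝ (Fin n) => f x) :
    Continuous fun x : EuclideanSpace ℝ (Fin n) => (L.map fun f => f x).foldr max 0 := by
  induction L with
  | nil => simpa using continuous_const
  | cons f t ih =>
    simp only [List.map_cons, List.foldr_cons]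
    exact (hL f (List.mem_cons_self)).max
      (ih fun g hg => hL g (List.mem_cons_of_mem f hg))

lemma continuous_Dval (lo hi : Fin n → ℝ) (η : ℝ) :
    Continuous fun x : EuclideanSpace ℝ (Fin n) => Dval lo hi η x := by
  apply continuous_val_list
  intro f hf
  obtain ⟨i, -, hfi⟩ := List.mem_flatMap.1 hf
  rcases List.mem_cons.1 hfi with rfl | hfi'
  · exact continuous_const.sub (continuous_coord i)
  · rcases List.mem_cons.1 hfi' with rfl | hh
    · exact ((continuous_coord i).sub continuous_const).add continuous_const
    · simp at hh

lemma continuous_bumpVal (lo hi : Fin n → ℝ) (η : ℝ) :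
    Continuous fun x : EuclideanSpace ℝ (Fin n) => bumpVal lo hi η x :=
  ((continuous_const.sub (continuous_Dval lo hi η)).max continuous_const).div_const η

lemma bumpVal_clamp (lo hi : Fin n → ℝ) {η C R : ℝ} (hη : 0 < η) (hη1 : η ≤ 1)
    (hlo : ∀ i, -R ≤ lo i) (hC : R + 1 ≤ C) (x : Fin n → ℝ) :
    bumpVal lo hi η (fun i => max (x i) (-C)) = bumpVal lo hi η x := by
  by_cases hall : ∀ i, -C ≤ x i
  · congr 1
    funext i
    exact max_eq_left (hall i)
  · push_neg at hall
    obtain ⟨i, hxi⟩ := hall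
    rw [bumpVal_eq_zero, bumpVal_eq_zero]
    · have h1 := lo_sub_le_Dval lo hi η x i
      have h2 := hlo i
      linarith
    · have h1 := lo_sub_le_Dval lo hi η (fun i => max (x i) (-C)) i
      have h3 : max (x i) (-C) = -C := max_eq_right hxi.le
      beta_reduce at h1
      rw [h3] at h1
      have h2 := hlo i
      linarith

lemma bumpVal_tendsto (lo hi : Fin n → ℝ) (x : EuclideanSpace ℝ (Fin n)) :
    Tendsto (fun l : ℕ => bumpVal lo hi (1/((l:ℝ)+1)) x) atTop (nhds (boxInd lo hi x)) := by
  have htend : Tendsto (fun l : ℕ => 1/((l:ℝ)+1)) atTop (nhds 0) :=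
    tendsto_one_div_add_atTop_nhds_zero_nat
  by_cases hx : x ∈ boxSet lo hi
  · rw [boxInd_of_mem hx]
    have hev : ∀ᶠ l : ℕ in atTop, bumpVal lo hi (1/((l:ℝ)+1)) x = 1 := by
      have h1 : ∀ i : Fin n, ∀ᶠ l : ℕ in atTop, 1/((l:ℝ)+1) < hi i - x i := fun i =>
        htend.eventually_lt_const (by have := (hx i).2; linarith)
      filter_upwards [eventually_all.2 h1] with l hl
      apply bumpVal_eq_one lo hi (by positivity) x
      intro i
      exact ⟨(hx i).1, by have := hl i; linarith⟩
    exact Tendsto.congr' (hev.mono fun l h => h.symm) tendsto_const_nhds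
  · rw [boxInd_of_not_mem hx]
    have hcase : ∃ i, x i < lo i ∨ hi i ≤ x i := by
      by_contra hcon
      push_neg at hcon
      exact hx hcon
    obtain ⟨i, hi2⟩ := hcase
    rcases hi2 with h1 | h2
    · have hev : ∀ᶠ l : ℕ in atTop, bumpVal lo hi (1/((l:ℝ)+1)) x = 0 := by
        filter_upwards [htend.eventually_lt_const (show (0:ℝ) < lo i - x i by linarith)] with l hl
        apply bumpVal_eq_zero
        have := lo_sub_le_Dval lo hi (1/((l:ℝ)+1)) x i
        linarith
      exact Tendsto.congr' (hev.mono fun l h => h.symm) tendsto_const_nhds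
    · have hev : ∀ l : ℕ, bumpVal lo hi (1/((l:ℝ)+1)) x = 0 := fun l => by
        apply bumpVal_eq_zero
        have := sub_hi_le_Dval lo hi (1/((l:ℝ)+1)) x i
        have hp : (0:ℝ) < 1/((l:ℝ)+1) := by positivity
        linarith
      simp only [hev]
      exact tendsto_const_nhds

end Bumps

section Sums
variable {n m : ℕ}

noncomputable def fsum (N : ℕ) (lo hi : Fin N → Fin n → ℝ) (c : Fin N → Fin m → ℝ)
    (x : EuclideanSpace ℝ (Fin n)) : EuclideanSpace ℝ (Fin m) :=
  WithLp.toLp 2 (fun k => ∑ t, c t k * boxInd (lo t) (hi t) x)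

noncomputable def Fsum (N : ℕ) (lo hi : Fin N → Fin n → ℝ) (c : Fin N → Fin m → ℝ)
    (η : ℝ) (x : EuclideanSpace ℝ (Fin n)) : EuclideanSpace ℝ (Fin m) :=
  WithLp.toLp 2 (fun k => ∑ t, c t k * bumpVal (lo t) (hi t) η x)

lemma fsum_aesm (N : ℕ) (lo hi : Fin N → Fin n → ℝ) (c : Fin N → Fin m → ℝ) :
    AEStronglyMeasurable (fsum N lo hi c) (volume : Measure (EuclideanSpace ℝ (Fin n))) := by
  apply Measurable.aestronglyMeasurable
  apply measurable_into_euclid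
  intro k
  apply Finset.measurable_sum
  intro t _
  exact (measurable_boxInd (lo t) (hi t)).const_mul _

lemma Fsum_cont (N : ℕ) (lo hi : Fin N → Fin n → ℝ) (c : Fin N → Fin m → ℝ) (η : ℝ) :
    Continuous (Fsum N lo hi c η) := by
  apply continuous_into_euclid
  intro k
  apply continuous_finset_sum
  intro t _
  exact continuous_const.mul (continuous_bumpVal (lo t) (hi t) η)

lemma euclid_sub_apply (u v : EuclideanSpace ℝ (Fin m)) (k : Fin m) :
    (u - v) k = u k - v k := rfl

lemma stageC {p : ℝ} (hp : 1 ≤ p) (N : ℕ) (lo hi : Fin N → Fin n → ℝ)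
    (c : Fin N → Fin m → ℝ) (R : ℝ) (hlo : ∀ t i, -R ≤ lo t i) (hhi : ∀ t i, hi t i ≤ R)
    {ε3 : ℝ} (hε3 : 0 < ε3) :
    ∃ η : ℝ, 0 < η ∧ η ≤ 1 ∧
      eLpNorm (fun x => fsum N lo hi c x - Fsum N lo hi c η x)
        (ENNReal.ofReal p) volume ≤ ENNReal.ofReal ε3 := by
  classical
  set CB : ℝ := ∑ k, ∑ t, |c t k| with hCBdef
  have hCB : 0 ≤ CB := by positivity
  set bigball : Set (EuclideanSpace ℝ (Fin n)) :=
    Metric.closedBall 0 ((n:ℝ)*(R+1)+1) with hbigball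
  set bound : EuclideanSpace ℝ (Fin n) → ℝ := bigball.indicator (fun _ => CB) with hbound
  have hvanish : ∀ η : ℝ, 0 < η → η ≤ 1 → ∀ x : EuclideanSpace ℝ (Fin n), x ∉ bigball →
      ∀ t : Fin N, boxInd (lo t) (hi t) x = 0 ∧ bumpVal (lo t) (hi t) η x = 0 := by
    intro η hη hη1 x hx t
    have hnorm : (n:ℝ)*(R+1)+1 < ‖x‖ := by
      have := hx
      rw [hbigball, Metric.mem_closedBall, dist_zero_right, not_le] at this
      exact this
    have hcoords : ¬ (∀ i, |x i| ≤ R + 1) := by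
      intro hall
      have h1 : ‖x‖ ≤ ∑ i, |x i| := euclid_norm_le_sum x
      have h2 : ∑ i : Fin n, |x i| ≤ ∑ _i : Fin n, (R+1) :=
        Finset.sum_le_sum fun i _ => hall i
      rw [Finset.sum_const, Finset.card_univ, Fintype.card_fin, nsmul_eq_mul] at h2
      linarith
    push_neg at hcoords
    obtain ⟨i, habs⟩ := hcoords
    constructor
    · apply boxInd_of_not_mem
      intro hmem
      have h1 := (hmem i).1
      have h2 := (hmem i).2
      have h3 := hlo t i
      have h4 := hhi t i
      have : |x i| ≤ R + 1 := abs_le.2 ⟨by linarith, by linarith⟩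
      linarith
    · apply bumpVal_eq_zero
      rcases lt_or_ge (x i) 0 with hneg | hpos
      · have hlt : x i < -(R+1) := by
          rw [abs_of_neg hneg] at habs
          linarith
        have h1 := lo_sub_le_Dval (lo t) (hi t) η x i
        have h2 := hlo t i
        linarith
      · have hgt : R + 1 < x i := by
          rw [abs_of_nonneg hpos] at habs
          linarith
        have h1 := sub_hi_le_Dval (lo t) (hi t) η x i
        have h2 := hhi t i
        linarith
  have hηpos : ∀ l : ℕ, (0:ℝ) < 1/((l:ℝ)+1) := fun l => by positivity
  have hηle : ∀ l : ℕ, 1/((l:ℝ)+1) ≤ 1 := fun l => by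
    rw [div_le_one (by positivity)]
    simp
  set G : ℕ → EuclideanSpace ℝ (Fin n) → EuclideanSpace ℝ (Fin m) :=
    fun l x => fsum N lo hi c x - Fsum N lo hi c (1/((l:ℝ)+1)) x with hG
  have hGmeas : ∀ l, AEStronglyMeasurable (G l) volume := fun l =>
    (fsum_aesm N lo hi c).sub (Fsum_cont N lo hi c _).aestronglyMeasurable
  have hb : ∀ l x, ‖G l x‖ ≤ bound x := by
    intro l x
    by_cases hx : x ∈ bigball
    · rw [hbound, Set.indicator_of_mem hx]
      calc ‖G l x‖ ≤ ∑ k, |(G l x) k| := euclid_norm_le_sum _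
        _ ≤ CB := by
          rw [hCBdef]
          apply Finset.sum_le_sum
          intro k _
          rw [hG]
          beta_reduce
          rw [euclid_sub_apply]
          show |fsum N lo hi c x k - Fsum N lo hi c (1/((l:ℝ)+1)) x k| ≤ _
          rw [fsum, Fsum]
          rw [← Finset.sum_sub_distrib]
          calc |∑ t, (c t k * boxInd (lo t) (hi t) x
                - c t k * bumpVal (lo t) (hi t) (1/((l:ℝ)+1)) x)|
              ≤ ∑ t, |c t k * boxInd (lo t) (hi t) x
                - c t k * bumpVal (lo t) (hi t) (1/((l:ℝ)+1)) x| :=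
            Finset.abs_sum_le_sum_abs _ _
            _ ≤ ∑ t, |c t k| := by
              apply Finset.sum_le_sum
              intro t _
              rw [← mul_sub, abs_mul]
              have hb1 := boxInd_nonneg (lo t) (hi t) x
              have hb2 := boxInd_le_one (lo t) (hi t) x
              have hb3 := bumpVal_nonneg (lo t) (hi t) (hηpos l) x
              have hb4 := bumpVal_le_one (lo t) (hi t) (hηpos l) x
              have : |boxInd (lo t) (hi t) x
                  - bumpVal (lo t) (hi t) (1/((l:ℝ)+1)) x| ≤ 1 :=
                abs_le.2 ⟨by linarith, by linarith⟩
              calc |c t k| * |boxInd (lo t) (hi t) x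
                  - bumpVal (lo t) (hi t) (1/((l:ℝ)+1)) x| ≤ |c t k| * 1 :=
                mul_le_mul_of_nonneg_left this (abs_nonneg _)
                _ = |c t k| := mul_one _
    · have hv := hvanish (1/((l:ℝ)+1)) (hηpos l) (hηle l) x hx
      have h1 : fsum N lo hi c x = 0 := by
        ext k
        rw [fsum, PiLp.toLp_apply, PiLp.zero_apply]
        beta_reduce
        apply Finset.sum_eq_zero
        intro t _
        rw [(hv t).1, mul_zero]
      have h2 : Fsum N lo hi c (1/((l:ℝ)+1)) x = 0 := by
        ext k
        rw [Fsum, PiLp.toLp_apply, PiLp.zero_apply]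
        beta_reduce
        apply Finset.sum_eq_zero
        intro t _
        rw [(hv t).2, mul_zero]
      rw [hG]
      beta_reduce
      rw [h1, h2, sub_zero, norm_zero, hbound, Set.indicator_of_notMem hx]
  have hboundmem : MemLp bound (ENNReal.ofReal p) volume := by
    rw [hbound]
    exact memLp_indicator_const _ measurableSet_closedBall CB
      (Or.inr measure_closedBall_lt_top.ne)
  have hlim : ∀ x, Tendsto (fun l => G l x) atTop (nhds 0) := by
    intro x
    rw [tendsto_zero_iff_norm_tendsto_zero]
    apply squeeze_zero (fun l => norm_nonneg _)
      (fun l => euclid_norm_le_sum (G l x))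
    have : Tendsto (fun l : ℕ => ∑ k, |(G l x) k|) atTop (nhds (∑ _k : Fin m, 0)) := by
      apply tendsto_finset_sum
      intro k _
      have hco : Tendsto (fun l : ℕ => (G l x) k) atTop (nhds 0) := by
        have : ∀ l : ℕ, (G l x) k = ∑ t, c t k * (boxInd (lo t) (hi t) x
            - bumpVal (lo t) (hi t) (1/((l:ℝ)+1)) x) := by
          intro l
          rw [hG]
          beta_reduce
          rw [euclid_sub_apply]
          show fsum N lo hi c x k - Fsum N lo hi c (1/((l:ℝ)+1)) x k = _
          rw [fsum, Fsum]
          rw [← Finset.sum_sub_distrib]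
          congr 1
          funext t
          ring
        simp only [this]
        have h0 : (0:ℝ) = ∑ _t : Fin N, (0:ℝ) := by simp
        rw [h0]
        apply tendsto_finset_sum
        intro t _
        have := (tendsto_const_nhds (x := boxInd (lo t) (hi t) x) (f := atTop (α := ℕ))).sub
          (bumpVal_tendsto (lo t) (hi t) x)
        rw [sub_self] at this
        simpa using this.const_mul (c t k)
      simpa using hco.abs
    simpa using this
  have htend := tendsto_eLpNorm_of_dominated hp G hGmeas bound hb hboundmem hlim
  obtain ⟨l, hl⟩ := exists_eLpNorm_le htend hε3
  exact ⟨1/((l:ℝ)+1), hηpos l, hηle l, hl⟩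

end Sums

section StageB
variable {n m : ℕ}

lemma finsum_enum {α M : Type*} [AddCommMonoid M] (s : Finset α) (F : α → M) :
    ∑ t : Fin s.toList.length, F (s.toList.get t) = ∑ a ∈ s, F a := by
  rw [Fin.sum_univ_def]
  have h1 : List.map (fun t => F (s.toList.get t)) (List.finRange s.toList.length)
      = List.map F s.toList := by
    rw [show (fun t => F (s.toList.get t)) = F ∘ s.toList.get from rfl]
    rw [← List.map_map, List.map_get_finRange]
  rw [h1, Finset.sum_eq_multiset_sum, ← Finset.coe_toList s, Multiset.map_coe,
    Multiset.sum_coe]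

noncomputable def centerOf (l : ℕ) (t : Fin n → ℤ) : EuclideanSpace ℝ (Fin n) :=
  WithLp.toLp 2 (fun i => ((t i : ℝ) + 1/2) / ((l:ℝ)+1))

noncomputable def loOf (l : ℕ) (t : Fin n → ℤ) : Fin n → ℝ :=
  fun i => (t i : ℝ) / ((l:ℝ)+1)

noncomputable def hiOf (l : ℕ) (t : Fin n → ℤ) : Fin n → ℝ :=
  fun i => ((t i : ℝ) + 1) / ((l:ℝ)+1)

noncomputable def gridF (K : ℕ) (l : ℕ) : Finset (Fin n → ℤ) :=
  Fintype.piFinset fun _ => Finset.Ico (-(K * (l+1) : ℤ)) (K * (l+1))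

noncomputable def SF (K : ℕ) (l : ℕ) (g : EuclideanSpace ℝ (Fin n) → EuclideanSpace ℝ (Fin m))
    (x : EuclideanSpace ℝ (Fin n)) : EuclideanSpace ℝ (Fin m) :=
  WithLp.toLp 2 (fun k => ∑ t ∈ gridF K l, g (centerOf l t) k * boxInd (loOf l t) (hiOf l t) x)

lemma collapse (K : ℕ) (l : ℕ) (g : EuclideanSpace ℝ (Fin n) → EuclideanSpace ℝ (Fin m))
    (x : EuclideanSpace ℝ (Fin n)) :
    SF K l g x = if ∀ i, -(K:ℝ) ≤ x i ∧ x i < K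
      then g (centerOf l (fun i => ⌊x i * ((l:ℝ)+1)⌋)) else 0 := by
  classical
  have hlpos : (0:ℝ) < (l:ℝ)+1 := by positivity
  by_cases hin : ∀ i, -(K:ℝ) ≤ x i ∧ x i < K
  · rw [if_pos hin]
    set t0 : Fin n → ℤ := fun i => ⌊x i * ((l:ℝ)+1)⌋ with ht0
    have ht0mem : t0 ∈ gridF K l := by
      rw [gridF, Fintype.mem_piFinset]
      intro i
      rw [Finset.mem_Ico]
      constructor
      · show -(K * (l+1) : ℤ) ≤ ⌊x i * ((l:ℝ)+1)⌋
        rw [Int.le_floor]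
        push_cast
        have := (hin i).1
        nlinarith
      · show ⌊x i * ((l:ℝ)+1)⌋ < (K * (l+1) : ℤ)
        rw [Int.floor_lt]
        push_cast
        have := (hin i).2
        nlinarith
    have hmem0 : x ∈ boxSet (loOf l t0) (hiOf l t0) := by
      intro i
      constructor
      · show (t0 i : ℝ)/((l:ℝ)+1) ≤ x i
        rw [div_le_iff₀ hlpos]
        exact Int.floor_le _
      · show x i < ((t0 i : ℝ)+1)/((l:ℝ)+1)
        rw [lt_div_iff₀ hlpos]
        exact Int.lt_floor_add_one _
    ext k
    show (∑ t ∈ gridF K l, g (centerOf l t) k * boxInd (loOf l t) (hiOf l t) x) = _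
    rw [Finset.sum_eq_single_of_mem t0 ht0mem]
    · rw [boxInd_of_mem hmem0, mul_one]
    · intro t ht hne
      have hnm : x ∉ boxSet (loOf l t) (hiOf l t) := by
        intro hmem
        apply hne
        funext i
        have h1 : (t i : ℝ)/((l:ℝ)+1) ≤ x i := (hmem i).1
        have h2 : x i < ((t i : ℝ)+1)/((l:ℝ)+1) := (hmem i).2
        rw [div_le_iff₀ hlpos] at h1
        rw [lt_div_iff₀ hlpos] at h2
        exact (Int.floor_eq_iff.2 ⟨h1, h2⟩).symm
      rw [boxInd_of_not_mem hnm, mul_zero]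
  · rw [if_neg hin]
    push_neg at hin
    ext k
    show (∑ t ∈ gridF K l, g (centerOf l t) k * boxInd (loOf l t) (hiOf l t) x) = _
    apply Finset.sum_eq_zero
    intro t ht
    rw [gridF, Fintype.mem_piFinset] at ht
    have hnm : x ∉ boxSet (loOf l t) (hiOf l t) := by
      intro hmem
      obtain ⟨i, hi2⟩ := hin
      have h1 : (t i : ℝ)/((l:ℝ)+1) ≤ x i := (hmem i).1
      have h2 : x i < ((t i : ℝ)+1)/((l:ℝ)+1) := (hmem i).2
      have hti := ht i
      rw [Finset.mem_Ico] at hti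
      have hA : (-(K:ℝ)) * ((l:ℝ)+1) ≤ (t i : ℝ) := by
        have h' : ((-(K * (l+1) : ℤ)) : ℝ) ≤ ((t i : ℤ) : ℝ) := by exact_mod_cast hti.1
        push_cast at h'
        linarith
      have hB : (t i : ℝ) + 1 ≤ (K:ℝ) * ((l:ℝ)+1) := by
        have hBz : t i + 1 ≤ (K * (l+1) : ℤ) := Int.add_one_le_iff.2 hti.2
        have h' : ((t i + 1 : ℤ) : ℝ) ≤ ((K * (l+1) : ℤ) : ℝ) := by exact_mod_cast hBz
        push_cast at h'
        linarith
      have hlo2 : -(K:ℝ) ≤ x i := by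
        have : (-(K:ℝ)) ≤ (t i : ℝ)/((l:ℝ)+1) := (le_div_iff₀ hlpos).2 hA
        linarith
      have hhi2 : x i < (K:ℝ) := by
        have : ((t i : ℝ)+1)/((l:ℝ)+1) ≤ (K:ℝ) := (div_le_iff₀ hlpos).2 hB
        linarith
      exact absurd (hi2 hlo2) (not_le.2 hhi2)
    rw [boxInd_of_not_mem hnm, mul_zero]

lemma SF_aesm (K : ℕ) (l : ℕ) (g : EuclideanSpace ℝ (Fin n) → EuclideanSpace ℝ (Fin m)) :
    AEStronglyMeasurable (SF K l g) (volume : Measure (EuclideanSpace ℝ (Fin n))) := by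
  apply Measurable.aestronglyMeasurable
  apply measurable_into_euclid
  intro k
  apply Finset.measurable_sum
  intro t _
  exact (measurable_boxInd (loOf l t) (hiOf l t)).const_mul _

lemma stageB {p : ℝ} (hp : 1 ≤ p) (g : EuclideanSpace ℝ (Fin n) → EuclideanSpace ℝ (Fin m))
    (hgc : Continuous g) (hgs : HasCompactSupport g) {ε3 : ℝ} (hε3 : 0 < ε3) :
    ∃ (N : ℕ) (lo hi : Fin N → Fin n → ℝ) (c : Fin N → Fin m → ℝ) (R : ℝ),
      (∀ t i, -R ≤ lo t i) ∧ (∀ t i, hi t i ≤ R) ∧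
      eLpNorm (fun x => g x - fsum N lo hi c x) (ENNReal.ofReal p) volume
        ≤ ENNReal.ofReal ε3 := by
  classical
  obtain ⟨r0, hr0⟩ := hgs.isBounded.subset_closedBall 0
  obtain ⟨M, hM⟩ := hgc.bounded_above_of_compact_support hgs
  set M0 := max M 0 with hM0
  have hM0nn : (0:ℝ) ≤ M0 := le_max_right _ _
  have hMx : ∀ x, ‖g x‖ ≤ M0 := fun x => (hM x).trans (le_max_left _ _)
  obtain ⟨K, hKr⟩ : ∃ K : ℕ, r0 < (K:ℝ) := by
    refine ⟨⌈max r0 0⌉₊ + 1, ?_⟩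
    have h1 : max r0 0 ≤ (⌈max r0 0⌉₊ : ℝ) := Nat.le_ceil _
    have h3 := le_max_left r0 (0:ℝ)
    push_cast
    linarith
  have hgzero : ∀ x : EuclideanSpace ℝ (Fin n),
      (¬ ∀ i, -(K:ℝ) ≤ x i ∧ x i < K) → g x = 0 := by
    intro x hx
    push_neg at hx
    obtain ⟨i, hi2⟩ := hx
    apply image_eq_zero_of_notMem_tsupport
    intro hmem
    have h1 := hr0 hmem
    rw [Metric.mem_closedBall, dist_zero_right] at h1
    have h2 := abs_coord_le_norm x i
    have h3 : (K:ℝ) ≤ |x i| := by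
      by_cases hcc : -(K:ℝ) ≤ x i
      · exact (hi2 hcc).trans (le_abs_self _)
      · push_neg at hcc
        have h4 : (K:ℝ) ≤ -x i := by linarith
        exact h4.trans (neg_le_abs _)
    linarith
  set G : ℕ → EuclideanSpace ℝ (Fin n) → EuclideanSpace ℝ (Fin m) :=
    fun l x => g x - SF K l g x with hG
  have hGmeas : ∀ l, AEStronglyMeasurable (G l) volume := fun l =>
    hgc.aestronglyMeasurable.sub (SF_aesm K l g)
  set bigball : Set (EuclideanSpace ℝ (Fin n)) :=
    Metric.closedBall 0 ((n:ℝ)*(K:ℝ)+1) with hbigball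
  set bound : EuclideanSpace ℝ (Fin n) → ℝ :=
    fun x => ‖g x‖ + bigball.indicator (fun _ => M0) x with hbound
  have hb : ∀ l x, ‖G l x‖ ≤ bound x := by
    intro l x
    have hnormle : ‖G l x‖ ≤ ‖g x‖ + ‖SF K l g x‖ := norm_sub_le _ _
    by_cases hin : ∀ i, -(K:ℝ) ≤ x i ∧ x i < K
    · have hball : x ∈ bigball := by
        rw [hbigball, Metric.mem_closedBall, dist_zero_right]
        calc ‖x‖ ≤ ∑ i, |x i| := euclid_norm_le_sum x
          _ ≤ ∑ _i : Fin n, (K:ℝ) :=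
            Finset.sum_le_sum fun i _ => abs_le.2 ⟨(hin i).1, (hin i).2.le⟩
          _ = (n:ℝ)*(K:ℝ) := by
            rw [Finset.sum_const, Finset.card_univ, Fintype.card_fin, nsmul_eq_mul]
          _ ≤ (n:ℝ)*(K:ℝ)+1 := by linarith
      rw [hbound]
      beta_reduce
      rw [Set.indicator_of_mem hball]
      have hsf : ‖SF K l g x‖ ≤ M0 := by
        rw [collapse, if_pos hin]
        exact hMx _
      linarith
    · have hsf0 : SF K l g x = 0 := by rw [collapse, if_neg hin]
      have hGx : G l x = g x := by rw [hG]; beta_reduce; rw [hsf0, sub_zero]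
      rw [hGx, hbound]
      have hind : (0:ℝ) ≤ bigball.indicator (fun _ => M0) x :=
        Set.indicator_nonneg (fun _ _ => hM0nn) x
      beta_reduce
      linarith
  have hboundmem : MemLp bound (ENNReal.ofReal p) volume := by
    rw [hbound]
    exact ((hgc.memLp_of_hasCompactSupport hgs).norm).add
      (memLp_indicator_const _ measurableSet_closedBall M0
        (Or.inr measure_closedBall_lt_top.ne))
  have hlim : ∀ x, Tendsto (fun l => G l x) atTop (nhds 0) := by
    intro x
    by_cases hin : ∀ i, -(K:ℝ) ≤ x i ∧ x i < K
    · have hGl : ∀ l : ℕ, G l x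
          = g x - g (centerOf l (fun i => ⌊x i * ((l:ℝ)+1)⌋)) := by
        intro l
        rw [hG]
        beta_reduce
        rw [collapse, if_pos hin]
      have hcent : Tendsto (fun l : ℕ => centerOf l (fun i => ⌊x i * ((l:ℝ)+1)⌋))
          atTop (nhds x) := by
        rw [tendsto_iff_dist_tendsto_zero]
        have hub : ∀ l : ℕ, dist (centerOf l (fun i => ⌊x i * ((l:ℝ)+1)⌋)) x
            ≤ (n:ℝ) * (1/((l:ℝ)+1)) := by
          intro l
          have hlpos : (0:ℝ) < (l:ℝ)+1 := by positivity
          rw [dist_eq_norm]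
          calc ‖centerOf l (fun i => ⌊x i * ((l:ℝ)+1)⌋) - x‖
              ≤ ∑ i, |(centerOf l (fun i => ⌊x i * ((l:ℝ)+1)⌋) - x) i| :=
            euclid_norm_le_sum _
            _ ≤ ∑ _i : Fin n, 1/((l:ℝ)+1) := by
              apply Finset.sum_le_sum
              intro i _
              have hco : (centerOf l (fun i => ⌊x i * ((l:ℝ)+1)⌋) - x) i
                  = ((⌊x i * ((l:ℝ)+1)⌋:ℝ) + 1/2)/((l:ℝ)+1) - x i := rfl
              rw [hco]
              have e1 : ((⌊x i * ((l:ℝ)+1)⌋:ℝ) + 1/2)/((l:ℝ)+1) - x i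
                  = ((⌊x i * ((l:ℝ)+1)⌋:ℝ) + 1/2 - x i * ((l:ℝ)+1))/((l:ℝ)+1) := by
                field_simp
              rw [e1, abs_div, abs_of_pos hlpos]
              have h1 := Int.floor_le (x i * ((l:ℝ)+1))
              have h2 := Int.lt_floor_add_one (x i * ((l:ℝ)+1))
              have habs : |(⌊x i * ((l:ℝ)+1)⌋:ℝ) + 1/2 - x i * ((l:ℝ)+1)| ≤ 1 :=
                abs_le.2 ⟨by linarith, by linarith⟩
              gcongr
            _ = (n:ℝ) * (1/((l:ℝ)+1)) := by
              rw [Finset.sum_const, Finset.card_univ, Fintype.card_fin, nsmul_eq_mul]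
        apply squeeze_zero (fun l => dist_nonneg) hub
        have := tendsto_one_div_add_atTop_nhds_zero_nat.const_mul (n:ℝ)
        simpa using this
      simp only [hGl]
      have h2 := (tendsto_const_nhds (x := g x) (f := (atTop : Filter ℕ))).sub
        ((hgc.tendsto x).comp hcent)
      simpa using h2
    · have hGl : ∀ l : ℕ, G l x = 0 := by
        intro l
        rw [hG]
        beta_reduce
        rw [collapse, if_neg hin, sub_zero, hgzero x hin]
      simp only [hGl]
      exact tendsto_const_nhds
  have htend := tendsto_eLpNorm_of_dominated hp G hGmeas bound hb hboundmem hlim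
  obtain ⟨l, hl⟩ := exists_eLpNorm_le htend hε3
  refine ⟨(gridF K l (n := n)).toList.length,
    fun t => loOf l ((gridF K l (n := n)).toList.get t),
    fun t => hiOf l ((gridF K l (n := n)).toList.get t),
    fun t k => g (centerOf l ((gridF K l (n := n)).toList.get t)) k,
    (K:ℝ), ?_, ?_, ?_⟩
  · intro t i
    have hmem : (gridF K l (n := n)).toList.get t ∈ gridF K l (n := n) :=
      Finset.mem_toList.1 (List.get_mem _ t)
    unfold gridF at hmem
    rw [Fintype.mem_piFinset] at hmem
    have hti := hmem i
    rw [Finset.mem_Ico] at hti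
    have hlpos : (0:ℝ) < (l:ℝ)+1 := by positivity
    have hA : (-(K:ℝ)) * ((l:ℝ)+1) ≤ (((gridF K l (n := n)).toList.get t) i : ℝ) := by
      have h' : ((-(K * (l+1) : ℤ)) : ℝ) ≤ ((((gridF K l (n := n)).toList.get t) i : ℤ) : ℝ) := by
        exact_mod_cast hti.1
      push_cast at h'
      linarith
    show -(K:ℝ) ≤ (((gridF K l (n := n)).toList.get t) i : ℝ) / ((l:ℝ)+1)
    rw [le_div_iff₀ hlpos]
    linarith
  · intro t i
    have hmem : (gridF K l (n := n)).toList.get t ∈ gridF K l (n := n) :=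
      Finset.mem_toList.1 (List.get_mem _ t)
    unfold gridF at hmem
    rw [Fintype.mem_piFinset] at hmem
    have hti := hmem i
    rw [Finset.mem_Ico] at hti
    have hlpos : (0:ℝ) < (l:ℝ)+1 := by positivity
    have hB : (((gridF K l (n := n)).toList.get t) i : ℝ) + 1 ≤ (K:ℝ) * ((l:ℝ)+1) := by
      have hBz : ((gridF K l (n := n)).toList.get t) i + 1 ≤ (K * (l+1) : ℤ) :=
        Int.add_one_le_iff.2 hti.2
      have h' : ((((gridF K l (n := n)).toList.get t) i + 1 : ℤ) : ℝ)
          ≤ ((K * (l+1) : ℤ) : ℝ) := by exact_mod_cast hBz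
      push_cast at h'
      linarith
    show ((((gridF K l (n := n)).toList.get t) i : ℝ) + 1) / ((l:ℝ)+1) ≤ (K:ℝ)
    rw [div_le_iff₀ hlpos]
    linarith
  · have heq : (fun x => g x - fsum (gridF K l (n := n)).toList.length
        (fun t => loOf l ((gridF K l (n := n)).toList.get t))
        (fun t => hiOf l ((gridF K l (n := n)).toList.get t))
        (fun t k => g (centerOf l ((gridF K l (n := n)).toList.get t)) k) x) = G l := by
      funext x
      rw [hG]
      beta_reduce
      congr 1
      ext k
      show (∑ t : Fin (gridF K l (n := n)).toList.length, _) = _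
      rw [finsum_enum (gridF K l (n := n))
        (fun a => g (centerOf l a) k * boxInd (loOf l a) (hiOf l a) x)]
      rfl
    rw [heq]
    exact hl
end StageB

end RNet

/-- Theorem 3 of the paper (deep narrow ReLU networks are dense in `L^p`):
for every `f* ∈ L^p(ℝⁿ; ℝᵐ)`, `p ∈ [1, ∞)`, and every `ε > 0`, there is a
feedforward ReLU network `g` with hidden layers of width exactly `n + m + 1`
and identity output activation such that `‖f* − g‖_{L^p} ≤ ε`. -/
theorem relu_network_dense_in_Lp
    (n m : ℕ) (p : ℝ) (hp : 1 ≤ p)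
    (fstar : EuclideanSpace ℝ (Fin n) → EuclideanSpace ℝ (Fin m))
    (hf : MemLp fstar (ENNReal.ofReal p) volume)
    (ε : ℝ) (hε : 0 < ε) :
    ∃ (j : ℕ)
      (A₁ : Matrix (Fin (n + m + 1)) (Fin n) ℝ) (b₁ : Fin (n + m + 1) → ℝ)
      (As : Fin j → Matrix (Fin (n + m + 1)) (Fin (n + m + 1)) ℝ)
      (bs : Fin j → Fin (n + m + 1) → ℝ)
      (Aout : Matrix (Fin m) (Fin (n + m + 1)) ℝ) (bout : Fin m → ℝ),
      eLpNorm (fun x => fstar x - reluNetwork n m j A₁ b₁ As bs Aout bout x)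
          (ENNReal.ofReal p) volume ≤ ENNReal.ofReal ε := by
  classical
  have hε3 : (0:ℝ) < ε/3 := by linarith
  have hq1 : (1:ℝ≥0∞) ≤ ENNReal.ofReal p := ENNReal.one_le_ofReal.2 hp
  obtain ⟨g, hgs, hfg, hgc, hgmem⟩ :=
    hf.exists_hasCompactSupport_eLpNorm_sub_le (ENNReal.ofReal_ne_top)
      (ε := ENNReal.ofReal (ε/3)) (by simp [ENNReal.ofReal_eq_zero]; linarith)
  obtain ⟨N, lo, hi, c, R, hlo, hhi, hB⟩ := RNet.stageB hp g hgc hgs hε3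
  obtain ⟨η, hη, hη1, hC⟩ := RNet.stageC hp N lo hi c R hlo hhi hε3
  set C : ℝ := max R 0 + 1 with hCdef
  obtain ⟨j, A₁, b₁, As, bs, Aout, bout, hnet⟩ :=
    RNet.network_exists (n := n) (m := m)
      (List.ofFn fun t => (lo t, hi t, c t)) η C hη
  have hnet' : ∀ x, reluNetwork n m j A₁ b₁ As bs Aout bout x
      = RNet.Fsum N lo hi c η x := by
    intro x
    rw [hnet x]
    ext k
    rw [PiLp.toLp_apply, List.map_ofFn, List.sum_ofFn]
    show (∑ t, c t k * RNet.bumpVal (lo t) (hi t) η (fun i => max (x i) (-C))) = _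
    have hcl : ∀ t : Fin N,
        RNet.bumpVal (lo t) (hi t) η (fun i => max (x i) (-C))
          = RNet.bumpVal (lo t) (hi t) η x := by
      intro t
      apply RNet.bumpVal_clamp (lo t) (hi t) hη hη1 (R := max R 0)
      · intro i
        have h1 := hlo t i
        have h2 := le_max_left R 0
        linarith
      · rw [hCdef]
    simp only [hcl]
    rfl
  have hfunrw : (fun x => fstar x - reluNetwork n m j A₁ b₁ As bs Aout bout x)
      = (fun x => fstar x - g x)
        + ((fun x => g x - RNet.fsum N lo hi c x)
          + (fun x => RNet.fsum N lo hi c x - RNet.Fsum N lo hi c η x)) := by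
    funext x
    rw [hnet' x]
    show fstar x - RNet.Fsum N lo hi c η x
      = (fstar x - g x) + ((g x - RNet.fsum N lo hi c x)
        + (RNet.fsum N lo hi c x - RNet.Fsum N lo hi c η x))
    abel
  refine ⟨j, A₁, b₁, As, bs, Aout, bout, ?_⟩
  rw [hfunrw]
  have h1 : AEStronglyMeasurable (fun x => fstar x - g x)
      (volume : Measure (EuclideanSpace ℝ (Fin n))) :=
    hf.aestronglyMeasurable.sub hgmem.aestronglyMeasurable
  have h2 : AEStronglyMeasurable (fun x => g x - RNet.fsum N lo hi c x)
      (volume : Measure (EuclideanSpace ℝ (Fin n))) :=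
    hgc.aestronglyMeasurable.sub (RNet.fsum_aesm N lo hi c)
  have h3 : AEStronglyMeasurable
      (fun x => RNet.fsum N lo hi c x - RNet.Fsum N lo hi c η x)
      (volume : Measure (EuclideanSpace ℝ (Fin n))) :=
    (RNet.fsum_aesm N lo hi c).sub (RNet.Fsum_cont N lo hi c η).aestronglyMeasurable
  have hfg' : eLpNorm (fun x => fstar x - g x) (ENNReal.ofReal p) volume
      ≤ ENNReal.ofReal (ε/3) := hfg
  calc eLpNorm _ (ENNReal.ofReal p) volume
      ≤ eLpNorm (fun x => fstar x - g x) (ENNReal.ofReal p) volume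
        + eLpNorm ((fun x => g x - RNet.fsum N lo hi c x)
          + (fun x => RNet.fsum N lo hi c x - RNet.Fsum N lo hi c η x))
            (ENNReal.ofReal p) volume :=
      eLpNorm_add_le h1 (h2.add h3) hq1
    _ ≤ ENNReal.ofReal (ε/3)
        + (eLpNorm (fun x => g x - RNet.fsum N lo hi c x) (ENNReal.ofReal p) volume
          + eLpNorm (fun x => RNet.fsum N lo hi c x - RNet.Fsum N lo hi c η x)
            (ENNReal.ofReal p) volume) :=
      add_le_add hfg' (eLpNorm_add_le h2 h3 hq1)
    _ ≤ ENNReal.ofReal (ε/3) + (ENNReal.ofReal (ε/3) + ENNReal.ofReal (ε/3)) :=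
      add_le_add le_rfl (add_le_add hB hC)
    _ = ENNReal.ofReal ε := by
      rw [← ENNReal.ofReal_add (by linarith) (by linarith),
        ← ENNReal.ofReal_add (by linarith) (by linarith)]
      congr 1
      ring
end
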